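/- The dual of a 3-connected 3-regular bipartite planar graph embedded on the sphere contains no subgraph isomorphic to K_4. -/

import Mathlib

open SimpleGraph

/-- `H` is a minor of `G`: disjoint nonempty connected branch sets with edges
between the branch sets of adjacent vertices of `H`. -/
def GraphMinor {W V : Type} (H : SimpleGraph W) (G : SimpleGraph V) : Prop :=
  ∃ f : W → Set V,
    (∀ w, (f w).Nonempty) ∧
    (∀ w, (G.induce (f w)).Connected) ∧
    (∀ w w', w ≠ w' → Disjoint (f w) (f w')) ∧
    (∀ w w', H.Adj w w' → ∃ x ∈ f w, ∃ y ∈ f w', G.Adj x y)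

/-- A graph is planar iff it has no `K₅` minor and no `K_{3,3}` minor (Wagner's theorem). -/
def IsPlanar {V : Type} (G : SimpleGraph V) : Prop :=
  ¬ GraphMinor (completeGraph (Fin 5)) G ∧
  ¬ GraphMinor (completeBipartiteGraph (Fin 3) (Fin 3)) G

/-- A triangulation on the sphere: a maximal planar graph with at least 4 vertices. -/
def IsSphereTriangulation {V : Type} (T : SimpleGraph V) : Prop :=
  4 ≤ Nat.card V ∧ IsPlanar T ∧
    ∀ u v : V, u ≠ v → ¬ T.Adj u v →
      ¬ IsPlanar (T ⊔ SimpleGraph.fromRel (fun a b => a = u ∧ b = v))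

/-- The setoid on `α` whose classes are the cycles (orbits) of a permutation. -/
def cycleSetoid {α : Type} (f : Equiv.Perm α) : Setoid α :=
  ⟨f.SameCycle, ⟨fun x => Equiv.Perm.SameCycle.refl f x,
    fun h => h.symm, fun h h' => h.trans h'⟩⟩

/-- The dart-reversal involution as a permutation of the darts of `G`. -/
def dartFlip {V : Type} (G : SimpleGraph V) : Equiv.Perm G.Dart :=
  ⟨SimpleGraph.Dart.symm, SimpleGraph.Dart.symm,
    fun d => SimpleGraph.Dart.symm_symm d, fun d => SimpleGraph.Dart.symm_symm d⟩

/-- A combinatorial embedding of `G` on the sphere: a rotation system (a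
permutation of the darts whose cycles are exactly the stars of the vertices)
satisfying Euler's formula `|V| - |E| + |F| = 2`, where the faces are the
cycles of the face permutation `ρ ∘ flip`. -/
structure SphereEmbedding {V : Type} (G : SimpleGraph V) where
  ρ : Equiv.Perm G.Dart
  fst_fix : ∀ d : G.Dart, (ρ d).toProd.1 = d.toProd.1
  vertex_cycle : ∀ d d' : G.Dart, d.toProd.1 = d'.toProd.1 → ρ.SameCycle d d'
  euler : Nat.card V + Nat.card (Quotient (cycleSetoid (ρ * dartFlip G)))
            = Nat.card G.edgeSet + 2

/-- The face permutation of an embedding. -/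
def facePerm {V : Type} {G : SimpleGraph V} (e : SphereEmbedding G) :
    Equiv.Perm G.Dart :=
  e.ρ * dartFlip G

/-- The faces of an embedding: the cycles of the face permutation. -/
def Faces {V : Type} {G : SimpleGraph V} (e : SphereEmbedding G) : Type :=
  Quotient (cycleSetoid (facePerm e))

/-- The face containing a given dart. -/
def faceOf {V : Type} {G : SimpleGraph V} (e : SphereEmbedding G) (d : G.Dart) :
    Faces e :=
  Quotient.mk (cycleSetoid (facePerm e)) d

/-- The dual graph of an embedded graph: vertices are the faces, two distinct
faces being adjacent when they share an edge. -/
def dualGraph {V : Type} {G : SimpleGraph V} (e : SphereEmbedding G) :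
    SimpleGraph (Faces e) :=
  SimpleGraph.fromRel (fun F F' => ∃ d : G.Dart, faceOf e d = F ∧ faceOf e d.symm = F')

/-- `G` is 3-connected: at least 4 vertices, and removing any at most 2
vertices leaves a connected graph. -/
def ThreeConnected {V : Type} (G : SimpleGraph V) : Prop :=
  4 ≤ Nat.card V ∧ ∀ s : Set V, s.ncard ≤ 2 → (G.induce sᶜ).Connected

section Aux

set_option linter.unusedSectionVars false

variable {V : Type} [Fintype V] {G : SimpleGraph V}

lemma facePerm_symm_apply (e : SphereEmbedding G) (d : G.Dart) :
    facePerm e d.symm = e.ρ d := by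
  simp [facePerm, dartFlip, Equiv.Perm.mul_apply]

lemma faceOf_symm (e : SphereEmbedding G) (d : G.Dart) :
    faceOf e d.symm = faceOf e (e.ρ d) :=
  Quot.sound ⟨1, by rw [zpow_one, facePerm_symm_apply]⟩

lemma vert_const (hG : G.Connected) {β : Type} (a : V → β)
    (ha : ∀ u v : V, G.Adj u v → a u = a v) (u v : V) : a u = a v := by
  obtain ⟨w⟩ := hG.preconnected u v
  induction w with
  | nil => rfl
  | cons h p ih => exact (ha _ _ h).trans ih

lemma face_const (e : SphereEmbedding G) (hG : G.Connected) {β : Type} (c : Faces e → β)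
    (hc : ∀ d : G.Dart, c (faceOf e d.symm) = c (faceOf e d)) :
    ∀ d d' : G.Dart, c (faceOf e d) = c (faceOf e d') := by
  classical
  have hstep : ∀ d : G.Dart, c (faceOf e (e.ρ d)) = c (faceOf e d) := by
    intro d
    rw [← faceOf_symm e d]
    exact hc d
  have hpow : ∀ (n : ℕ) (d : G.Dart), c (faceOf e ((e.ρ ^ n) d)) = c (faceOf e d) := by
    intro n
    induction n with
    | zero => intro d; simp
    | succ n ih =>
        intro d
        have h : (e.ρ ^ (n + 1)) d = (e.ρ ^ n) (e.ρ d) := by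
          rw [pow_succ]
          rfl
        rw [h, ih (e.ρ d), hstep d]
  have hstar : ∀ d d' : G.Dart, d.toProd.1 = d'.toProd.1 →
      c (faceOf e d) = c (faceOf e d') := by
    intro d d' h
    obtain ⟨n, -, hn⟩ := (e.vertex_cycle d d' h).exists_pow_eq'
    rw [← hn, hpow]
  have key : ∀ (u v : V) (w : G.Walk u v) (d d' : G.Dart),
      d.toProd.1 = u → d'.toProd.1 = v → c (faceOf e d) = c (faceOf e d') := by
    intro u v w
    induction w with
    | nil =>
        intro d d' h h'
        exact hstar d d' (h.trans h'.symm)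
    | @cons u x v h w ih =>
        intro d d' hd hd'
        have h1 : c (faceOf e d) = c (faceOf e (SimpleGraph.Dart.mk (u, x) h)) :=
          hstar _ _ (by simpa using hd)
        have h2 : c (faceOf e (SimpleGraph.Dart.mk (u, x) h))
            = c (faceOf e (SimpleGraph.Dart.mk (u, x) h).symm) := (hc _).symm
        rw [h1, h2]
        exact ih _ d' rfl hd'
  intro d d'
  obtain ⟨w⟩ := hG.preconnected d.toProd.1 d'.toProd.1
  exact key _ _ w d d' rfl rfl

/-- The darts with first vertex `v` are equivalent to the neighbors of `v`. -/
def starEquiv (G : SimpleGraph V) (v : V) :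
    {d : G.Dart // d.toProd.1 = v} ≃ G.neighborSet v where
  toFun d := ⟨d.1.toProd.2, by have := d.1.adj; rwa [d.2] at this⟩
  invFun w := ⟨SimpleGraph.Dart.mk (v, w.1) w.2, rfl⟩
  left_inv d := by
    apply Subtype.ext
    apply SimpleGraph.Dart.ext
    exact Prod.ext d.2.symm rfl
  right_inv w := rfl

end Aux

/-- The dual of a 3-connected 3-regular bipartite planar graph embedded on the
sphere contains no subgraph isomorphic to `K₄`, i.e. no 4-clique of faces. -/
theorem dual_of_cubic_bipartite_K4_free {V : Type} [Fintype V]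
    (G : SimpleGraph V) (h3 : ThreeConnected G)
    (hcubic : ∀ v : V, (G.neighborSet v).ncard = 3)
    (hbip : G.Colorable 2) (e : SphereEmbedding G) :
    ¬ ∃ s : Set (Faces e), (dualGraph e).IsClique s ∧ s.ncard = 4 := by
  classical
  haveI : Fintype (Faces e) := Quotient.fintype (cycleSetoid (facePerm e))
  rintro ⟨s, hclique, hcard⟩
  have hconn : G.Connected := by
    have h := h3.2 ∅ (by simp)
    rwa [Set.compl_empty, (induceUnivIso G).connected_iff] at h
  have hstar3 : ∀ v : V, Fintype.card {d : G.Dart // d.toProd.1 = v} = 3 := by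
    intro v
    rw [Fintype.card_congr (starEquiv G v), ← Nat.card_eq_fintype_card,
      Nat.card_coe_set_eq, hcubic v]
  have hdartex : ∀ v : V, ∃ d : G.Dart, d.toProd.1 = v := by
    intro v
    have h0 : 0 < Fintype.card {d : G.Dart // d.toProd.1 = v} := by rw [hstar3 v]; norm_num
    obtain ⟨d⟩ := Fintype.card_pos_iff.mp h0
    exact ⟨d.1, d.2⟩
  have hV : Nonempty V := by
    have h4 := h3.1
    have h0 : 0 < Nat.card V := by omega
    exact (Nat.card_pos_iff.mp h0).1
  obtain ⟨v₀⟩ := hV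
  obtain ⟨d₀, -⟩ := hdartex v₀
  obtain ⟨C⟩ := hbip
  -- choose for each edge a dart whose source has color 0
  have hex : ∀ (ed : Sym2 V), ed ∈ G.edgeSet →
      ∃ d : G.Dart, d.edge = ed ∧ C d.toProd.1 = 0 := by
    intro ed
    induction ed using Sym2.ind with
    | _ u v =>
      intro hed
      rw [SimpleGraph.mem_edgeSet] at hed
      have h01 : ∀ x : Fin 2, x = 0 ∨ x = 1 := by decide
      rcases h01 (C u) with h | h
      · exact ⟨SimpleGraph.Dart.mk (u, v) hed, rfl, h⟩
      · refine ⟨SimpleGraph.Dart.mk (v, u) hed.symm, Sym2.eq_swap, ?_⟩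
        have hne := C.valid hed
        rcases h01 (C v) with h' | h'
        · exact h'
        · exact absurd (h.trans h'.symm) hne
  choose de' hde' hde0' using hex
  set de : G.edgeSet → G.Dart := fun ed => de' ed.1 ed.2 with hde_def
  have hde : ∀ ed : G.edgeSet, (de ed).edge = (ed : Sym2 V) := fun ed => hde' ed.1 ed.2
  have hde0 : ∀ ed : G.edgeSet, C (de ed).toProd.1 = 0 := fun ed => hde0' ed.1 ed.2
  have hdartcases : ∀ (d : G.Dart) (ed : G.edgeSet), d.edge = (ed : Sym2 V) →
      d = de ed ∨ d = (de ed).symm := fun d ed h =>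
    (SimpleGraph.dart_edge_eq_iff d (de ed)).mp (h.trans (hde ed).symm)
  -- summation over edges equals summation over darts
  have hsum : ∀ u : G.Dart → ZMod 3,
      ∑ ed : G.edgeSet, (u (de ed) + u ((de ed).symm)) = ∑ d : G.Dart, u d := by
    intro u
    have hbij : Function.Bijective
        (fun p : G.edgeSet × Bool => if p.2 then (de p.1).symm else de p.1) := by
      constructor
      · rintro ⟨a, b⟩ ⟨a', b'⟩ h
        have hedge : (a : Sym2 V) = (a' : Sym2 V) := by
          have h1 := congrArg SimpleGraph.Dart.edge h
          cases b <;> cases b' <;>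
            simpa [SimpleGraph.Dart.edge_symm, hde] using h1
        obtain rfl : a = a' := Subtype.ext hedge
        cases b <;> cases b' <;> simp_all
        · exact absurd h.symm ((de a).symm_ne)
        · exact absurd h ((de a).symm_ne)
      · intro d
        rcases hdartcases d ⟨d.edge, d.edge_mem⟩ rfl with h | h
        · exact ⟨⟨⟨d.edge, d.edge_mem⟩, false⟩, h.symm⟩
        · exact ⟨⟨⟨d.edge, d.edge_mem⟩, true⟩, h.symm⟩
    calc ∑ ed : G.edgeSet, (u (de ed) + u ((de ed).symm))
        = ∑ p : G.edgeSet × Bool, u (if p.2 then (de p.1).symm else de p.1) := by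
          rw [Fintype.sum_prod_type]
          refine Finset.sum_congr rfl fun ed _ => ?_
          rw [Fintype.sum_bool]
          simp [add_comm]
      _ = ∑ d : G.Dart, u d := Fintype.sum_bijective _ hbij _ u (fun p => rfl)
  -- the incidence and dual-incidence matrices
  set IM : Matrix G.edgeSet V (ZMod 3) := fun ed v =>
    (if (de ed).toProd.1 = v then 1 else 0) - (if (de ed).toProd.2 = v then 1 else 0) with hIM
  set DM : Matrix G.edgeSet (Faces e) (ZMod 3) := fun ed F =>
    (if faceOf e (de ed).symm = F then 1 else 0) - (if faceOf e (de ed) = F then 1 else 0) with hDM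
  have hDMmul : ∀ (c : Faces e → ZMod 3) (ed : G.edgeSet),
      DM.mulVecLin c ed = c (faceOf e (de ed).symm) - c (faceOf e (de ed)) := by
    intro c ed
    rw [Matrix.mulVecLin_apply]
    simp [hDM, Matrix.mulVecLin_apply, Matrix.mulVec, dotProduct, sub_mul,
      Finset.sum_sub_distrib, ite_mul, Finset.sum_ite_eq]
  have hIMmul : ∀ (a : V → ZMod 3) (ed : G.edgeSet),
      IM.mulVecLin a ed = a (de ed).toProd.1 - a (de ed).toProd.2 := by
    intro a ed
    rw [Matrix.mulVecLin_apply]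
    simp [hIM, Matrix.mulVecLin_apply, Matrix.mulVec, dotProduct, sub_mul,
      Finset.sum_sub_distrib, ite_mul, Finset.sum_ite_eq]
  have hIMTmul : ∀ (x : G.edgeSet → ZMod 3) (v : V),
      IM.transpose.mulVecLin x v = ∑ ed : G.edgeSet, IM ed v * x ed := by
    intro x v
    simp [Matrix.mulVecLin_apply, Matrix.mulVec, Matrix.vecMul, dotProduct,
      Matrix.transpose_apply, mul_comm]
  have hstarsum : ∀ (g : G.Dart → ZMod 3) (v : V),
      ∑ d : G.Dart, ((if d.toProd.1 = v then (1 : ZMod 3) else 0) * g (e.ρ d)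
        - (if d.toProd.1 = v then (1 : ZMod 3) else 0) * g d) = 0 := by
    intro g v
    rw [Finset.sum_sub_distrib, sub_eq_zero]
    have h := Equiv.sum_comp e.ρ
      (fun d : G.Dart => (if d.toProd.1 = v then (1 : ZMod 3) else 0) * g d)
    rw [← h]
    refine Finset.sum_congr rfl fun d _ => ?_
    rw [e.fst_fix d]
  -- range of DM is contained in ker of IMᵀ
  have hRN : LinearMap.range DM.mulVecLin ≤ LinearMap.ker IM.transpose.mulVecLin := by
    rintro x ⟨c, rfl⟩
    rw [LinearMap.mem_ker]
    funext v
    show IM.transpose.mulVecLin (DM.mulVecLin c) v = 0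
    set uu : G.Dart → ZMod 3 := fun d =>
      (if d.toProd.1 = v then (1 : ZMod 3) else 0) * (c (faceOf e d.symm) - c (faceOf e d))
      with huu
    have hper : ∀ ed : G.edgeSet,
        IM ed v * (c (faceOf e (de ed).symm) - c (faceOf e (de ed)))
        = uu (de ed) + uu ((de ed).symm) := by
      intro ed
      simp only [huu, hIM, SimpleGraph.Dart.symm_toProd, Prod.fst_swap,
        SimpleGraph.Dart.symm_symm]
      ring
    calc IM.transpose.mulVecLin (DM.mulVecLin c) v
        = ∑ ed : G.edgeSet, IM ed v * (DM.mulVecLin c ed) := hIMTmul _ v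
      _ = ∑ ed : G.edgeSet, (uu (de ed) + uu ((de ed).symm)) := by
          refine Finset.sum_congr rfl fun ed _ => ?_
          rw [hDMmul c ed, hper ed]
      _ = ∑ d : G.Dart, uu d := hsum uu
      _ = 0 := by
          rw [← hstarsum (fun d => c (faceOf e d)) v]
          refine Finset.sum_congr rfl fun d _ => ?_
          simp only [huu]
          rw [mul_sub]
          congr 1
          rw [faceOf_symm e d]
  -- the all-ones vector lies in ker of IMᵀ
  have hφmem : (fun _ => (1 : ZMod 3)) ∈ LinearMap.ker IM.transpose.mulVecLin := by
    rw [LinearMap.mem_ker]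
    funext v
    show IM.transpose.mulVecLin (fun _ => (1 : ZMod 3)) v = 0
    set sg : G.Dart → ZMod 3 := fun d => if C d.toProd.1 = 0 then 1 else -1 with hsg
    set uu : G.Dart → ZMod 3 := fun d =>
      (if d.toProd.1 = v then (1 : ZMod 3) else 0) * sg d with huu
    have hper : ∀ ed : G.edgeSet, IM ed v * 1 = uu (de ed) + uu ((de ed).symm) := by
      intro ed
      have h1 : sg (de ed) = 1 := by rw [hsg]; simp [hde0 ed]
      have h2 : sg ((de ed).symm) = -1 := by
        rw [hsg]
        have hvalid := C.valid (de ed).adj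
        simp only [SimpleGraph.Dart.symm_toProd, Prod.fst_swap]
        rw [if_neg]
        intro h
        exact hvalid ((hde0 ed).trans h.symm)
      simp only [huu, hIM, SimpleGraph.Dart.symm_toProd, Prod.fst_swap, h1, h2]
      ring
    calc IM.transpose.mulVecLin (fun _ => (1 : ZMod 3)) v
        = ∑ ed : G.edgeSet, IM ed v * 1 := hIMTmul _ v
      _ = ∑ ed : G.edgeSet, (uu (de ed) + uu ((de ed).symm)) :=
          Finset.sum_congr rfl fun ed _ => hper ed
      _ = ∑ d : G.Dart, uu d := hsum uu
      _ = 0 := by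
          have hcongr : ∀ d : G.Dart, uu d
              = if d.toProd.1 = v then (if C v = 0 then (1 : ZMod 3) else -1) else 0 := by
            intro d
            simp only [huu, hsg]
            by_cases h : d.toProd.1 = v
            · rw [if_pos h, if_pos h, h, one_mul]
            · rw [if_neg h, if_neg h, zero_mul]
          rw [Finset.sum_congr rfl fun d _ => hcongr d]
          rw [Finset.sum_ite, Finset.sum_const_zero, add_zero, Finset.sum_const]
          have hcard : (Finset.univ.filter fun d : G.Dart => d.toProd.1 = v).card = 3 := by
            rw [← Fintype.card_subtype]
            exact hstar3 v
          rw [hcard]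
          by_cases h : C v = 0 <;> simp [h] <;> decide
  -- kernel of DM is at most one-dimensional
  have hkerD : Module.finrank (ZMod 3) (LinearMap.ker DM.mulVecLin) ≤ 1 := by
    have hle : LinearMap.ker DM.mulVecLin ≤ LinearMap.range
        ((LinearMap.id : ZMod 3 →ₗ[ZMod 3] ZMod 3).smulRight
          ((fun _ => (1 : ZMod 3)) : Faces e → ZMod 3)) := by
      intro c hc
      rw [LinearMap.mem_ker] at hc
      have h1 : ∀ ed : G.edgeSet, c (faceOf e (de ed).symm) = c (faceOf e (de ed)) := by
        intro ed
        have h2 := congrFun hc ed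
        rw [hDMmul] at h2
        exact sub_eq_zero.mp h2
      have hall : ∀ d : G.Dart, c (faceOf e d.symm) = c (faceOf e d) := by
        intro d
        rcases hdartcases d ⟨d.edge, d.edge_mem⟩ rfl with h | h
        · rw [h]; exact h1 _
        · rw [h, SimpleGraph.Dart.symm_symm]; exact (h1 _).symm
      have hfc := face_const e hconn c hall
      refine ⟨c (faceOf e d₀), ?_⟩
      funext F
      obtain ⟨d, hd⟩ := Quot.exists_rep F
      have hFd : faceOf e d = F := hd
      simp only [LinearMap.smulRight_apply, LinearMap.id_apply, Pi.smul_apply,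
        smul_eq_mul, mul_one]
      rw [← hFd]
      exact (hfc d₀ d).symm ▸ (hfc d₀ d) ▸ rfl
    calc Module.finrank (ZMod 3) (LinearMap.ker DM.mulVecLin)
        ≤ Module.finrank (ZMod 3) (LinearMap.range _) := Submodule.finrank_mono hle
      _ ≤ Module.finrank (ZMod 3) (ZMod 3) := LinearMap.finrank_range_le _
      _ = 1 := Module.finrank_self _
  -- kernel of IM is at most one-dimensional
  have hkerI : Module.finrank (ZMod 3) (LinearMap.ker IM.mulVecLin) ≤ 1 := by
    have hle : LinearMap.ker IM.mulVecLin ≤ LinearMap.range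
        ((LinearMap.id : ZMod 3 →ₗ[ZMod 3] ZMod 3).smulRight
          ((fun _ => (1 : ZMod 3)) : V → ZMod 3)) := by
      intro a ha
      rw [LinearMap.mem_ker] at ha
      have h1 : ∀ ed : G.edgeSet, a (de ed).toProd.1 = a (de ed).toProd.2 := by
        intro ed
        have h2 := congrFun ha ed
        rw [hIMmul] at h2
        exact sub_eq_zero.mp h2
      have hadj : ∀ u v : V, G.Adj u v → a u = a v := by
        intro u v huv
        set d : G.Dart := SimpleGraph.Dart.mk (u, v) huv with hd
        rcases hdartcases d ⟨d.edge, d.edge_mem⟩ rfl with h | h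
        · have h2 := h1 ⟨d.edge, d.edge_mem⟩
          rw [← h] at h2
          exact h2
        · have hsymm : de ⟨d.edge, d.edge_mem⟩ = d.symm := by
            have h9 := congrArg SimpleGraph.Dart.symm h
            rw [SimpleGraph.Dart.symm_symm] at h9
            exact h9.symm
          have h2 := h1 ⟨d.edge, d.edge_mem⟩
          rw [hsymm] at h2
          simpa using h2.symm
      have hvc := vert_const hconn a hadj
      refine ⟨a v₀, ?_⟩
      funext v
      simp only [LinearMap.smulRight_apply, LinearMap.id_apply, Pi.smul_apply,
        smul_eq_mul, mul_one]
      exact hvc v₀ v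
    calc Module.finrank (ZMod 3) (LinearMap.ker IM.mulVecLin)
        ≤ Module.finrank (ZMod 3) (LinearMap.range _) := Submodule.finrank_mono hle
      _ ≤ Module.finrank (ZMod 3) (ZMod 3) := LinearMap.finrank_range_le _
      _ = 1 := Module.finrank_self _
  -- rank-nullity bookkeeping and Euler's formula
  have h1 := LinearMap.finrank_range_add_finrank_ker DM.mulVecLin
  have h2 := LinearMap.finrank_range_add_finrank_ker IM.transpose.mulVecLin
  have h3' := LinearMap.finrank_range_add_finrank_ker IM.mulVecLin
  have htrans : Module.finrank (ZMod 3) (LinearMap.range IM.transpose.mulVecLin)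
      = Module.finrank (ZMod 3) (LinearMap.range IM.mulVecLin) := Matrix.rank_transpose IM
  have hn : Module.finrank (ZMod 3) (V → ZMod 3) = Nat.card V := by
    rw [Module.finrank_fintype_fun_eq_card, Nat.card_eq_fintype_card]
  have hm : Module.finrank (ZMod 3) (↥G.edgeSet → ZMod 3) = Nat.card G.edgeSet := by
    rw [Module.finrank_fintype_fun_eq_card, Nat.card_eq_fintype_card]
  have hf : Module.finrank (ZMod 3) (Faces e → ZMod 3) = Nat.card (Faces e) := by
    rw [Module.finrank_fintype_fun_eq_card, Nat.card_eq_fintype_card]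
  have heuler : Nat.card V + Nat.card (Faces e) = Nat.card G.edgeSet + 2 := e.euler
  rw [hf] at h1
  rw [hm] at h2
  rw [hn] at h3'
  have hNR : Module.finrank (ZMod 3) (LinearMap.ker IM.transpose.mulVecLin)
      ≤ Module.finrank (ZMod 3) (LinearMap.range DM.mulVecLin) := by
    omega
  have heq := Submodule.eq_of_le_of_finrank_le hRN hNR
  have hφrange : (fun _ => (1 : ZMod 3)) ∈ LinearMap.range DM.mulVecLin := by
    rw [heq]
    exact hφmem
  obtain ⟨c, hc⟩ := hφrange
  have hcd : ∀ ed : G.edgeSet, c (faceOf e (de ed).symm) - c (faceOf e (de ed)) = 1 := by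
    intro ed
    have h := congrFun hc ed
    rw [hDMmul] at h
    exact h
  have hneq : ∀ d : G.Dart, c (faceOf e d) ≠ c (faceOf e d.symm) := by
    intro d h
    rcases hdartcases d ⟨d.edge, d.edge_mem⟩ rfl with hh | hh
    · have h2 := hcd ⟨d.edge, d.edge_mem⟩
      rw [← hh, ← h, sub_self] at h2
      exact zero_ne_one h2
    · have hsymm : de ⟨d.edge, d.edge_mem⟩ = d.symm := by
        have h9 := congrArg SimpleGraph.Dart.symm hh
        rw [SimpleGraph.Dart.symm_symm] at h9
        exact h9.symm
      have h2 := hcd ⟨d.edge, d.edge_mem⟩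
      rw [hsymm, SimpleGraph.Dart.symm_symm, h, sub_self] at h2
      exact zero_ne_one h2
  have hprop : ∀ F F' : Faces e, (dualGraph e).Adj F F' → c F ≠ c F' := by
    intro F F' hadj
    simp only [dualGraph, SimpleGraph.fromRel_adj] at hadj
    obtain ⟨hne, h | h⟩ := hadj
    · obtain ⟨d, hd1, hd2⟩ := h
      rw [← hd1, ← hd2]
      exact hneq d
    · obtain ⟨d, hd1, hd2⟩ := h
      rw [← hd1, ← hd2]
      exact (hneq d).symm
  have hinj : Set.InjOn c s := by
    intro x hx y hy hxy
    by_contra hne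
    exact hprop x y (hclique hx hy hne) hxy
  have himg := Set.ncard_image_of_injOn hinj
  have hle3 : (c '' s).ncard ≤ 3 := by
    have hh := Set.ncard_le_ncard (Set.subset_univ (c '' s)) Set.finite_univ
    rwa [Set.ncard_univ, Nat.card_eq_fintype_card, ZMod.card] at hh
  rw [hcard] at himg
  omega
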